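/- Let C be a category, e ≥ 0, n ≥ 1, and let A be the pseudometric space on Fin n with d(i,j) = 2e for i ≠ j and d(i,i) = 0. Suppose given functors U_i : ℝ ⥤ C for i ∈ Fin n and, for each pair i ≠ j, a family of morphisms Φ_ij(s) : U_i(s) → U_j(s+2e), natural in s, such that for all s ∈ ℝ: (1) Φ_ji(s+2e) ∘ Φ_ij(s) = U_i applied to (s ≤ s+4e) for all distinct i, j; and (2) Φ_jk(s+2e) ∘ Φ_ij(s) = (U_k applied to (s+2e ≤ s+4e)) ∘ Φ_ik(s) for all pairwise distinct i, j, k. Then there exists a functor G : spacetime(A) ⥤ C such that for every i ∈ Fin n, the composite G ∘ η(i) is naturally isomorphic to U_i. -/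

import Mathlib

open CategoryTheory CategoryTheory.Limits

noncomputable section

/-- Translation functor `T_e : a ↦ a + e` on `ℝ`, viewed as a preorder category. -/
def Tr (e : ℝ) : ℝ ⥤ ℝ :=
  Monotone.functor (f := fun a : ℝ => a + e) (fun _ _ h => (add_le_add_iff_right e).mpr h)

@[simp] theorem Tr_obj (e a : ℝ) : (Tr e).obj a = a + e := rfl

theorem Tr_comp (e f : ℝ) : Tr e ⋙ Tr f = Tr (e + f) :=
  CategoryTheory.Functor.ext (fun a => add_assoc a e f) (fun _ _ _ => Subsingleton.elim _ _)

/-- The canonical natural transformation `U σ_e : U ⟶ U T_e` for `0 ≤ e`,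
whose component at `a` is `U` applied to `a ≤ a + e`. -/
def sigmaNat {C : Type*} [Category C] (U : ℝ ⥤ C) (e : ℝ) (he : 0 ≤ e) :
    U ⟶ Tr e ⋙ U where
  app a := U.map (homOfLE (le_add_of_nonneg_right he))
  naturality a b f := by
    dsimp [Tr]
    rw [← Functor.map_comp, ← Functor.map_comp]
    exact congrArg U.map (Subsingleton.elim _ _)

/-- `(Φ, Ψ)` is an `e`-interleaving of `U` and `V`:
`(Ψ whiskered by T_e) ∘ Φ = U σ_{2e}` and `(Φ whiskered by T_e) ∘ Ψ = V σ_{2e}`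
(the `eqToHom` transports along the equality of functors `T_{2e} = T_e ⋙ T_e`). -/
def IsInterleaving {C : Type*} [Category C] (e : ℝ) (he : 0 ≤ e) (U V : ℝ ⥤ C)
    (Φ : U ⟶ Tr e ⋙ V) (Ψ : V ⟶ Tr e ⋙ U) : Prop :=
  Φ ≫ Functor.whiskerLeft (Tr e) Ψ =
      sigmaNat U (2 * e) (by linarith) ≫ eqToHom (by rw [two_mul, ← Tr_comp, Functor.assoc]) ∧
    Ψ ≫ Functor.whiskerLeft (Tr e) Φ =
      sigmaNat V (2 * e) (by linarith) ≫ eqToHom (by rw [two_mul, ← Tr_comp, Functor.assoc])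

/-- `U` and `V` are `e`-interleaved. -/
def Interleaved {C : Type*} [Category C] (e : ℝ) (U V : ℝ ⥤ C) : Prop :=
  ∃ (he : 0 ≤ e) (Φ : U ⟶ Tr e ⋙ V) (Ψ : V ⟶ Tr e ⋙ U), IsInterleaving e he U V Φ Ψ

/-- The interleaving distance: the infimum in `[0,∞]` of the set of `e ≥ 0` such that
`U` and `V` are `e`-interleaved (`∞` if this set is empty). -/
noncomputable def dInt {C : Type*} [Category C] (U V : ℝ ⥤ C) : ENNReal :=
  sInf (ENNReal.ofReal '' {e : ℝ | Interleaved e U V})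

/-- The spacetime of a pseudometric space `M`: the set `M × ℝ` (encoded as a structure
with a point component and a time component). -/
@[ext] structure Spacetime (M : Type*) [PseudoMetricSpace M] where
  pos : M
  time : ℝ

/-- The spacetime preorder: `(x,s) ≤ (y,t)` iff `dist x y ≤ t - s`. -/
instance Spacetime.instPreorder (M : Type*) [PseudoMetricSpace M] :
    Preorder (Spacetime M) where
  le p q := dist p.pos q.pos ≤ q.time - p.time
  le_refl p := by simp
  le_trans p q r h₁ h₂ := by
    have h := dist_triangle p.pos q.pos r.pos
    change dist p.pos q.pos ≤ q.time - p.time at h₁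
    change dist q.pos r.pos ≤ r.time - q.time at h₂
    show dist p.pos r.pos ≤ r.time - p.time
    linarith

theorem Spacetime.le_def {M : Type*} [PseudoMetricSpace M] (p q : Spacetime M) :
    p ≤ q ↔ dist p.pos q.pos ≤ q.time - p.time := Iff.rfl

/-- The constant world line `η(x) : ℝ ⥤ Spacetime M` of a point `x`, i.e. the functor
induced by the monotone map `s ↦ (x, s)`. -/
def eta {M : Type*} [PseudoMetricSpace M] (x : M) : ℝ ⥤ Spacetime M :=
  Monotone.functor (f := fun s : ℝ => (⟨x, s⟩ : Spacetime M))
    (fun a b h => show dist x x ≤ b - a by rw [dist_self]; linarith)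

lemma real_hom_comp {C : Type*} [Category C] (F : ℝ ⥤ C) {a b c : ℝ} (h1 : a ≤ b) (h2 : b ≤ c) :
    F.map (homOfLE h1) ≫ F.map (homOfLE h2) = F.map (homOfLE (h1.trans h2)) := by
  rw [← Functor.map_comp]; rfl

lemma mapCongr {C : Type*} [Category C] (F : ℝ ⥤ C) {a b : ℝ} (f g : a ⟶ b) :
    F.map f = F.map g := congrArg F.map (Subsingleton.elim f g)

lemma eqToHom_eq_map {C : Type*} [Category C] (F : ℝ ⥤ C) {a b : ℝ} (h : a = b) :
    eqToHom (congrArg F.obj h) = F.map (homOfLE h.le) := by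
  subst h
  rw [eqToHom_refl]
  exact (F.map_id a).symm

/-- Conversely, let `A` be the pseudometric space on `Fin n` (`n ≥ 1`) with
`d(i,j) = 2e` for `i ≠ j`, and suppose given functors `U_i : ℝ ⥤ C` and families
`Φ_ij(s) : U_i(s) ⟶ U_j(s+2e)` (for `i ≠ j`), natural in `s`, satisfying
(1) `Φ_ji(s+2e) ∘ Φ_ij(s) = U_i (s ≤ s+4e)` and
(2) `Φ_jk(s+2e) ∘ Φ_ij(s) = U_k (s+2e ≤ s+4e) ∘ Φ_ik(s)`
(the `eqToHom`s transport along `s + 4e = s + 2e + 2e`). Then there is a functor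
`G : Spacetime A ⥤ C` with `G ∘ η(i) ≅ U_i` for every `i`. -/
theorem coherent_of_compatible_family {C : Type*} [Category C] (n : ℕ) (hn : 1 ≤ n)
    (e : ℝ) (he : 0 ≤ e) [PseudoMetricSpace (Fin n)]
    (hd : ∀ i j : Fin n, dist i j = if i = j then 0 else 2 * e)
    (U : Fin n → ℝ ⥤ C)
    (Φ : ∀ i j : Fin n, i ≠ j → ∀ s : ℝ, ((U i).obj s ⟶ (U j).obj (s + 2 * e)))
    (hnat : ∀ (i j : Fin n) (h : i ≠ j) (s t : ℝ) (hst : s ≤ t),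
      (U i).map (homOfLE hst) ≫ Φ i j h t =
        Φ i j h s ≫ (U j).map (homOfLE (show s + 2 * e ≤ t + 2 * e by linarith)))
    (h1 : ∀ (i j : Fin n) (h : i ≠ j) (s : ℝ),
      Φ i j h s ≫ Φ j i h.symm (s + 2 * e) =
        (U i).map (homOfLE (show s ≤ s + 4 * e by linarith)) ≫
          eqToHom (congrArg (U i).obj (by ring : s + 4 * e = s + 2 * e + 2 * e)))
    (h2 : ∀ (i j k : Fin n) (hij : i ≠ j) (hjk : j ≠ k) (hik : i ≠ k) (s : ℝ),
      Φ i j hij s ≫ Φ j k hjk (s + 2 * e) =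
        Φ i k hik s ≫ (U k).map (homOfLE (show s + 2 * e ≤ s + 4 * e by linarith)) ≫
          eqToHom (congrArg (U k).obj (by ring : s + 4 * e = s + 2 * e + 2 * e))) :
    ∃ G : Spacetime (Fin n) ⥤ C, ∀ i : Fin n, Nonempty (eta i ⋙ G ≅ U i) := by
  classical
  have hle : ∀ {p q : Spacetime (Fin n)}, p ≤ q → p.pos = q.pos → p.time ≤ q.time := by
    intro p q h heq
    have h' : dist p.pos q.pos ≤ q.time - p.time := h
    rw [hd, if_pos heq] at h'
    linarith
  have hlt : ∀ {p q : Spacetime (Fin n)}, p ≤ q → p.pos ≠ q.pos → p.time + 2*e ≤ q.time := by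
    intro p q h hne
    have h' : dist p.pos q.pos ≤ q.time - p.time := h
    rw [hd, if_neg hne] at h'
    linarith
  refine ⟨{
    obj := fun p => (U p.pos).obj p.time
    map := fun {p q} f =>
      if h : p.pos = q.pos then
        (U p.pos).map (homOfLE (hle (leOfHom f) h)) ≫ eqToHom (by rw [h])
      else
        Φ p.pos q.pos h p.time ≫ (U q.pos).map (homOfLE (hlt (leOfHom f) h))
    map_id := fun p => by
      rw [dif_pos rfl, eqToHom_refl, Category.comp_id]
      exact (U p.pos).map_id p.time
    map_comp := fun {p q r} f g => by
      obtain ⟨i, s⟩ := p; obtain ⟨j, t⟩ := q; obtain ⟨k, u⟩ := r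
      dsimp only
      by_cases hij : i = j
      · subst hij
        by_cases hik : i = k
        · subst hik
          rw [dif_pos rfl, dif_pos rfl, dif_pos rfl]
          simp only [eqToHom_refl, Category.comp_id, Category.id_comp, real_hom_comp]
        · rw [dif_pos rfl, dif_neg hik, dif_neg hik]
          simp only [eqToHom_refl, Category.comp_id, Category.id_comp]
          slice_rhs 1 2 => rw [hnat i k hik s t (hle (leOfHom f) rfl)]
          simp only [Category.assoc, real_hom_comp]
      · by_cases hjk : j = k
        · subst hjk
          rw [dif_neg hij, dif_pos rfl, dif_neg hij]
          simp only [eqToHom_refl, Category.comp_id, Category.id_comp, Category.assoc,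
            real_hom_comp]
        · by_cases hik : i = k
          · subst hik
            rw [dif_neg hij, dif_neg hjk, dif_pos rfl]
            simp only [eqToHom_refl, Category.comp_id, Category.id_comp, Category.assoc]
            slice_rhs 2 3 => rw [hnat j i hjk (s + 2*e) t (hlt (leOfHom f) hij)]
            slice_rhs 1 2 => rw [h1 i j hij s]
            rw [eqToHom_eq_map (U i) (show s + 4*e = s + 2*e + 2*e by ring)]
            simp only [Category.assoc, real_hom_comp]
          · rw [dif_neg hij, dif_neg hjk, dif_neg hik]
            slice_rhs 2 3 => rw [hnat j k hjk (s + 2*e) t (hlt (leOfHom f) hij)]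
            slice_rhs 1 2 => rw [h2 i j k hij hjk hik s]
            rw [eqToHom_eq_map (U k) (show s + 4*e = s + 2*e + 2*e by ring)]
            simp only [Category.assoc, real_hom_comp]
      }, ?_⟩
  intro i
  exact ⟨NatIso.ofComponents (fun s => Iso.refl _) (fun {s t} f => by
    dsimp [eta, Monotone.functor]
    simp only [Category.comp_id, Category.id_comp]
    exact mapCongr _ _ _)⟩


end
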